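/- Let X be a metric doubling metric space with shortcuts {(𝒥_i, δ_i)} and η ⊆ (0,1]. Then the identity map (X, d) → (X, d_η) is David–Semmes regular: it is 1-Lipschitz, and there is C ≥ 1 such that every d_η-ball of radius r is contained in a union of at most C d-balls of radius C·r. -/

import Mathlib

open Filter Set
open scoped ENNReal NNReal Topology

open scoped Classical in
/-- The distorted cost `ρ_η`: `η i · d(x, y)` if `x, y` lie in a common shortcut of level
`i`, and `d(x, y)` otherwise. -/
noncomputable def rhoEta {X : Type*} [MetricSpace X]
    (J : ℕ → Set (Set X)) (η : ℕ → ℝ) (x y : X) : ℝ :=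
  if h : ∃ i, ∃ S ∈ J i, x ∈ S ∧ y ∈ S then η h.choose * dist x y else dist x y

/-- The shortcut (pseudo-)distance `d_η`: the infimum over finite chains
`x = x₀, …, x_n = y` of `∑ ρ_η(x_{k-1}, x_k)`. -/
noncomputable def dEta {X : Type*} [MetricSpace X]
    (J : ℕ → Set (Set X)) (η : ℕ → ℝ) (x y : X) : ℝ :=
  sInf { t : ℝ | ∃ (n : ℕ) (c : ℕ → X), c 0 = x ∧ c n = y ∧
    t = ∑ k ∈ Finset.range n, rhoEta J η (c k) (c (k + 1)) }

/-- `X` is a metric space with shortcuts `{(𝒥 i, δ i)}` and constants `a₀, a, b, M`. -/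
def HasShortcuts {X : Type*} [MetricSpace X]
    (J : ℕ → Set (Set X)) (δ : ℕ → ℝ) (a₀ a b M : ℝ) : Prop :=
  0 < a₀ ∧ 0 < a ∧ 0 < b ∧ 0 < M ∧
  (∀ i, 0 < δ i) ∧ Tendsto δ atTop (𝓝 0) ∧
  (∀ i, (J i).Nonempty) ∧
  (∀ i j, ∀ S ∈ J i, ∀ S' ∈ J j, S ≠ S' → Disjoint S S') ∧
  (∀ i, ∀ S ∈ J i, ∀ x ∈ S, ∀ y ∈ S, x ≠ y → a₀ * δ i ≤ dist x y ∧ dist x y ≤ a * δ i) ∧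
  (∀ i j, i ≤ j → ∀ S ∈ J i, ∀ S' ∈ J j, S ≠ S' → ∀ x ∈ S, ∀ y ∈ S', b * δ j ≤ dist x y) ∧
  (∀ i, ∀ S ∈ J i, ∀ x y : X, (∀ z ∈ S, b * δ i ≤ dist x z) → (∀ z ∈ S, b * δ i ≤ dist y z) →
    ∀ z ∈ S, ∀ w ∈ S, dist x y ≤ dist x z + dist w y) ∧
  (∀ i, ∀ S ∈ J i, S.Finite ∧ 2 ≤ S.ncard ∧ (S.ncard : ℝ) ≤ M) ∧
  (∀ i, ∀ x : X, ∃ S ∈ J i, ∃ z ∈ S, dist x z ≤ M * δ i)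

set_option linter.unusedSectionVars false

namespace Stmt13Aux

open scoped Classical

variable {X : Type*} [MetricSpace X]

/-- Step `k` of the chain `c` is a genuine shortcut hop. -/
def isHop (J : ℕ → Set (Set X)) (c : ℕ → X) (k : ℕ) : Prop :=
  c k ≠ c (k + 1) ∧ ∃ i, ∃ S ∈ J i, c k ∈ S ∧ c (k + 1) ∈ S

/-- The (chosen) scale of step `k`. -/
noncomputable def scaleOf (J : ℕ → Set (Set X)) (δ : ℕ → ℝ) (c : ℕ → X) (k : ℕ) : ℝ :=
  if h : isHop J c k then δ h.2.choose else 0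

/-- The (chosen) shortcut set of step `k`. -/
noncomputable def wSet (J : ℕ → Set (Set X)) (c : ℕ → X) (k : ℕ) : Set X :=
  if h : isHop J c k then h.2.choose_spec.choose else ∅

lemma wSet_spec (J : ℕ → Set (Set X)) (c : ℕ → X) (k : ℕ) (h : isHop J c k) :
    wSet J c k ∈ J h.2.choose ∧ c k ∈ wSet J c k ∧ c (k + 1) ∈ wSet J c k := by
  have hs := h.2.choose_spec.choose_spec
  simp only [wSet, dif_pos h]
  exact ⟨hs.1, hs.2.1, hs.2.2⟩

lemma scaleOf_spec (J : ℕ → Set (Set X)) (δ : ℕ → ℝ) (c : ℕ → X) (k : ℕ) (h : isHop J c k) :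
    scaleOf J δ c k = δ h.2.choose := by
  simp only [scaleOf, dif_pos h]

lemma wSet_empty (J : ℕ → Set (Set X)) (c : ℕ → X) (k : ℕ) (h : ¬ isHop J c k) :
    wSet J c k = ∅ := by simp only [wSet, dif_neg h]

lemma scaleOf_zero (J : ℕ → Set (Set X)) (δ : ℕ → ℝ) (c : ℕ → X) (k : ℕ) (h : ¬ isHop J c k) :
    scaleOf J δ c k = 0 := by simp only [scaleOf, dif_neg h]

lemma scaleOf_pos (J : ℕ → Set (Set X)) (δ : ℕ → ℝ) (hδ : ∀ i, 0 < δ i)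
    (c : ℕ → X) (k : ℕ) (h : isHop J c k) : 0 < scaleOf J δ c k := by
  rw [scaleOf_spec J δ c k h]; exact hδ _

lemma rho_nonneg (J : ℕ → Set (Set X)) (η : ℕ → ℝ) (hη : ∀ i, 0 < η i ∧ η i ≤ 1) (u v : X) :
    0 ≤ rhoEta J η u v := by
  rw [rhoEta]
  split_ifs with h
  · exact mul_nonneg (hη _).1.le dist_nonneg
  · exact dist_nonneg

lemma rho_le_dist (J : ℕ → Set (Set X)) (η : ℕ → ℝ) (hη : ∀ i, 0 < η i ∧ η i ≤ 1) (u v : X) :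
    rhoEta J η u v ≤ dist u v := by
  rw [rhoEta]
  split_ifs with h
  · calc η h.choose * dist u v ≤ 1 * dist u v :=
        mul_le_mul_of_nonneg_right (hη _).2 dist_nonneg
      _ = dist u v := one_mul _
  · exact le_rfl

lemma dist_le_rho (J : ℕ → Set (Set X)) (η : ℕ → ℝ) (hη : ∀ i, 0 < η i ∧ η i ≤ 1)
    (c : ℕ → X) (k : ℕ) (h : ¬ isHop J c k) :
    dist (c k) (c (k + 1)) ≤ rhoEta J η (c k) (c (k + 1)) := by
  rw [isHop, not_and_or] at h
  rcases h with h | h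
  · rw [not_not] at h
    rw [h, dist_self]
    exact rho_nonneg J η hη _ _
  · rw [rhoEta, dif_neg h]

/-- Total cost of a chain. -/
noncomputable def chCost (J : ℕ → Set (Set X)) (η : ℕ → ℝ) (n : ℕ) (c : ℕ → X) : ℝ :=
  ∑ k ∈ Finset.range n, rhoEta J η (c k) (c (k + 1))

lemma chCost_nonneg (J : ℕ → Set (Set X)) (η : ℕ → ℝ) (hη : ∀ i, 0 < η i ∧ η i ≤ 1)
    (n : ℕ) (c : ℕ → X) : 0 ≤ chCost J η n c :=
  Finset.sum_nonneg fun _ _ => rho_nonneg J η hη _ _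

lemma chCost_shift (J : ℕ → Set (Set X)) (η : ℕ → ℝ) (m L : ℕ) (c : ℕ → X) :
    chCost J η L (fun j => c (m + j)) =
      ∑ k ∈ Finset.Ico m (m + L), rhoEta J η (c k) (c (k + 1)) := by
  rw [Finset.sum_Ico_eq_sum_range, Nat.add_sub_cancel_left]
  rfl

lemma chCost_seg_le (J : ℕ → Set (Set X)) (η : ℕ → ℝ) (hη : ∀ i, 0 < η i ∧ η i ≤ 1)
    (m L n : ℕ) (c : ℕ → X) (h : m + L ≤ n) :
    chCost J η L (fun j => c (m + j)) ≤ chCost J η n c := by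
  rw [chCost_shift]
  apply Finset.sum_le_sum_of_subset_of_nonneg
  · intro k hk
    rw [Finset.mem_Ico] at hk
    rw [Finset.mem_range]
    omega
  · exact fun k _ _ => rho_nonneg J η hη _ _

lemma chCost_prefix_le (J : ℕ → Set (Set X)) (η : ℕ → ℝ) (hη : ∀ i, 0 < η i ∧ η i ≤ 1)
    (m n : ℕ) (c : ℕ → X) (h : m ≤ n) :
    chCost J η m c ≤ chCost J η n c := by
  apply Finset.sum_le_sum_of_subset_of_nonneg
  · exact Finset.range_subset_range.mpr h
  · exact fun k _ _ => rho_nonneg J η hη _ _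

lemma chCost_split_le (J : ℕ → Set (Set X)) (η : ℕ → ℝ) (hη : ∀ i, 0 < η i ∧ η i ≤ 1)
    (k₁ m n : ℕ) (c : ℕ → X) (h1 : k₁ ≤ m) (h2 : m ≤ n) :
    chCost J η k₁ c + chCost J η (n - m) (fun j => c (m + j)) ≤ chCost J η n c := by
  have hmn : m + (n - m) = n := Nat.add_sub_cancel' h2
  rw [chCost_shift, hmn]
  have hsplit : chCost J η n c
      = (∑ k ∈ Finset.range m, rhoEta J η (c k) (c (k + 1)))
        + ∑ k ∈ Finset.Ico m n, rhoEta J η (c k) (c (k + 1)) :=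
    (Finset.sum_range_add_sum_Ico _ h2).symm
  rw [hsplit]
  apply add_le_add_left
  exact chCost_prefix_le J η hη k₁ m c h1

lemma dist_chain_le (J : ℕ → Set (Set X)) (η : ℕ → ℝ) (hη : ∀ i, 0 < η i ∧ η i ≤ 1)
    (n : ℕ) (c : ℕ → X) (hno : ∀ k, k < n → ¬ isHop J c k) :
    dist (c 0) (c n) ≤ chCost J η n c := by
  refine le_trans (dist_le_range_sum_dist c n) ?_
  apply Finset.sum_le_sum
  intro k hk
  exact dist_le_rho J η hη c k (hno k (Finset.mem_range.mp hk))

/-- Separation between two distinct shortcut sets, in terms of the smaller scale. -/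
lemma sep_sets {J : ℕ → Set (Set X)} {δ : ℕ → ℝ} {b : ℝ} (hb : 0 < b)
    (hsep : ∀ i j, i ≤ j → ∀ S ∈ J i, ∀ S' ∈ J j, S ≠ S' → ∀ x ∈ S, ∀ y ∈ S', b * δ j ≤ dist x y)
    {i i' : ℕ} {S S' : Set X} (hi : S ∈ J i) (hi' : S' ∈ J i') (hne : S ≠ S')
    (hle : δ i ≤ δ i') {p q : X} (hp : p ∈ S) (hq : q ∈ S') :
    b * δ i ≤ dist p q := by
  rcases le_total i i' with h | h
  · exact le_trans (mul_le_mul_of_nonneg_left hle hb.le) (hsep i i' h S hi S' hi' hne p hp q hq)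
  · have := hsep i' i h S' hi' S hi hne.symm q hq p hp
    rwa [dist_comm] at this

lemma wSet_unique {J : ℕ → Set (Set X)}
    (hdisj : ∀ i j, ∀ S ∈ J i, ∀ S' ∈ J j, S ≠ S' → Disjoint S S')
    (c : ℕ → X) (k : ℕ) (h : isHop J c k) {i' : ℕ} {S' : Set X}
    (h1 : S' ∈ J i') (h2 : c k ∈ S') : S' = wSet J c k := by
  by_contra hne
  have hd := hdisj i' h.2.choose S' h1 (wSet J c k) (wSet_spec J c k h).1 hne
  exact (Set.disjoint_left.mp hd h2) (wSet_spec J c k h).2.1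

lemma hop_pair_le {J : ℕ → Set (Set X)} {δ : ℕ → ℝ} {a₀ a : ℝ} (ha : 0 < a)
    (hδ : ∀ i, 0 < δ i)
    (hpair : ∀ i, ∀ S ∈ J i, ∀ x ∈ S, ∀ y ∈ S, x ≠ y → a₀ * δ i ≤ dist x y ∧ dist x y ≤ a * δ i)
    (c : ℕ → X) (k : ℕ) (h : isHop J c k) {p q : X}
    (hp : p ∈ wSet J c k) (hq : q ∈ wSet J c k) :
    dist p q ≤ a * scaleOf J δ c k := by
  rcases eq_or_ne p q with rfl | hne
  · rw [dist_self]
    have := scaleOf_pos J δ hδ c k h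
    positivity
  · rw [scaleOf_spec J δ c k h]
    exact (hpair _ _ (wSet_spec J c k h).1 _ hp _ hq hne).2


/-- **Main chain lemma.** If every hop of a chain has scale at most `s`, then the chain's
endpoints satisfy `dist ≤ cost + 2(a+b)s`; moreover with endpoint separation hypotheses the
error term improves. -/
theorem mainChain (J : ℕ → Set (Set X)) (δ : ℕ → ℝ) (a₀ a b M : ℝ) (η : ℕ → ℝ)
    (hS : HasShortcuts J δ a₀ a b M) (hη : ∀ i, 0 < η i ∧ η i ≤ 1)
    (s : ℝ) (hs : 0 ≤ s) :
    ∀ n : ℕ, ∀ c : ℕ → X,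
    (∀ k, k < n → scaleOf J δ c k ≤ s) →
    (((∀ k, k < n → ∀ w ∈ wSet J c k, b * scaleOf J δ c k ≤ dist (c 0) w) →
      (∀ k, k < n → ∀ w ∈ wSet J c k, b * scaleOf J δ c k ≤ dist (c n) w) →
      dist (c 0) (c n) ≤ chCost J η n c) ∧
     ((∀ k, k < n → ∀ w ∈ wSet J c k, b * scaleOf J δ c k ≤ dist (c n) w) →
      dist (c 0) (c n) ≤ chCost J η n c + (a + b) * s) ∧
     ((∀ k, k < n → ∀ w ∈ wSet J c k, b * scaleOf J δ c k ≤ dist (c 0) w) →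
      dist (c 0) (c n) ≤ chCost J η n c + (a + b) * s) ∧
     dist (c 0) (c n) ≤ chCost J η n c + 2 * ((a + b) * s)) := by
  obtain ⟨ha₀, ha, hb, hM, hδ, -, -, hdisj, hpair, hsepax, hbyp, -, -⟩ := hS
  have hab : 0 ≤ (a + b) * s := mul_nonneg (by linarith) hs
  intro n
  induction n using Nat.strong_induction_on with
  | _ n IH =>
  intro c hscale
  by_cases hH : ∃ k, k < n ∧ isHop J c k
  case neg =>
    push_neg at hH
    have hd : dist (c 0) (c n) ≤ chCost J η n c := dist_chain_le J η hη n c hH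
    exact ⟨fun _ _ => hd, fun _ => by linarith, fun _ => by linarith, by linarith⟩
  case pos =>
    obtain ⟨k₀, hk₀n, hk₀hop⟩ := hH
    set Hs : Finset ℕ := (Finset.range n).filter (fun k => isHop J c k) with hHsdef
    have hmemHs : ∀ k, k ∈ Hs ↔ (k < n ∧ isHop J c k) := by
      intro k; rw [hHsdef, Finset.mem_filter, Finset.mem_range]
    have hHsne : Hs.Nonempty := ⟨k₀, (hmemHs k₀).mpr ⟨hk₀n, hk₀hop⟩⟩
    obtain ⟨kst, hkstHs, hkstmax⟩ := Finset.exists_max_image Hs (scaleOf J δ c) hHsne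
    have hkst_hop : isHop J c kst := ((hmemHs kst).mp hkstHs).2
    have hkstn : kst < n := ((hmemHs kst).mp hkstHs).1
    have hWstJ : wSet J c kst ∈ J hkst_hop.2.choose := (wSet_spec J c kst hkst_hop).1
    have hδstval : scaleOf J δ c kst = δ hkst_hop.2.choose := scaleOf_spec J δ c kst hkst_hop
    have hδstpos : 0 < scaleOf J δ c kst := scaleOf_pos J δ hδ c kst hkst_hop
    have hδsts : scaleOf J δ c kst ≤ s := hscale kst hkstn
    set Fs : Finset ℕ := Hs.filter (fun k => wSet J c k = wSet J c kst) with hFsdef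
    have hmemFs : ∀ k, k ∈ Fs ↔ (k < n ∧ isHop J c k ∧ wSet J c k = wSet J c kst) := by
      intro k
      rw [hFsdef, Finset.mem_filter, hmemHs k]
      tauto
    have hFsne : Fs.Nonempty := ⟨kst, (hmemFs kst).mpr ⟨hkstn, hkst_hop, rfl⟩⟩
    set k₁ := Fs.min' hFsne with hk₁def
    set k₂ := Fs.max' hFsne with hk₂def
    have hk₁Fs := Fs.min'_mem hFsne
    have hk₂Fs := Fs.max'_mem hFsne
    have hk₁n : k₁ < n := ((hmemFs k₁).mp hk₁Fs).1
    have hk₂n : k₂ < n := ((hmemFs k₂).mp hk₂Fs).1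
    have hk₁hop : isHop J c k₁ := ((hmemFs k₁).mp hk₁Fs).2.1
    have hk₂hop : isHop J c k₂ := ((hmemFs k₂).mp hk₂Fs).2.1
    have hk₁W : wSet J c k₁ = wSet J c kst := ((hmemFs k₁).mp hk₁Fs).2.2
    have hk₂W : wSet J c k₂ = wSet J c kst := ((hmemFs k₂).mp hk₂Fs).2.2
    have he : c k₁ ∈ wSet J c kst := hk₁W ▸ (wSet_spec J c k₁ hk₁hop).2.1
    have hq : c (k₂ + 1) ∈ wSet J c kst := hk₂W ▸ (wSet_spec J c k₂ hk₂hop).2.2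
    -- the B chain
    set nB := n - (k₂ + 1) with hnBdef
    set cB : ℕ → X := fun j => c (k₂ + 1 + j) with hcBdef
    have hk₂1n : k₂ + 1 ≤ n := hk₂n
    have hBn : k₂ + 1 + nB = n := by omega
    have hBend : cB nB = c n := by rw [hcBdef]; simp only []; rw [hBn]
    have hB0 : cB 0 = c (k₂ + 1) := rfl
    have hscaleA : ∀ k, k < k₁ → scaleOf J δ c k ≤ s := fun k hk => hscale k (by omega)
    have hscaleB : ∀ j, j < nB → scaleOf J δ cB j ≤ s := by
      intro j hj
      have : scaleOf J δ cB j = scaleOf J δ c (k₂ + 1 + j) := rfl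
      rw [this]
      exact hscale _ (by omega)
    -- far hypotheses for the interior endpoints
    have heFar : ∀ k, k < k₁ → ∀ w ∈ wSet J c k, b * scaleOf J δ c k ≤ dist (c k₁) w := by
      intro k hk w hw
      by_cases hkh : isHop J c k
      · have hkn : k < n := by omega
        have hne : wSet J c k ≠ wSet J c kst := by
          intro heq
          have : k₁ ≤ k := Fs.min'_le k ((hmemFs k).mpr ⟨hkn, hkh, heq⟩)
          omega
        have hle : δ hkh.2.choose ≤ δ hkst_hop.2.choose := by
          have h1 : scaleOf J δ c k ≤ scaleOf J δ c kst :=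
            hkstmax k ((hmemHs k).mpr ⟨hkn, hkh⟩)
          rwa [scaleOf_spec J δ c k hkh, hδstval] at h1
        have := sep_sets hb hsepax (wSet_spec J c k hkh).1 hWstJ hne hle hw he
        rw [scaleOf_spec J δ c k hkh]
        rwa [dist_comm]
      · rw [wSet_empty J c k hkh] at hw
        exact absurd hw (Set.notMem_empty w)
    have hqFar : ∀ j, j < nB → ∀ w ∈ wSet J cB j, b * scaleOf J δ cB j ≤ dist (cB 0) w := by
      intro j hj w hw
      have hwc : w ∈ wSet J c (k₂ + 1 + j) := hw
      have hsc : scaleOf J δ cB j = scaleOf J δ c (k₂ + 1 + j) := rfl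
      rw [hsc, hB0]
      set k := k₂ + 1 + j with hkdef
      by_cases hkh : isHop J c k
      · have hkn : k < n := by omega
        have hne : wSet J c k ≠ wSet J c kst := by
          intro heq
          have : k ≤ k₂ := Fs.le_max' k ((hmemFs k).mpr ⟨hkn, hkh, heq⟩)
          omega
        have hle : δ hkh.2.choose ≤ δ hkst_hop.2.choose := by
          have h1 : scaleOf J δ c k ≤ scaleOf J δ c kst :=
            hkstmax k ((hmemHs k).mpr ⟨hkn, hkh⟩)
          rwa [scaleOf_spec J δ c k hkh, hδstval] at h1
        have := sep_sets hb hsepax (wSet_spec J c k hkh).1 hWstJ hne hle hwc hq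
        rw [scaleOf_spec J δ c k hkh]
        rwa [dist_comm]
      · rw [wSet_empty J c k hkh] at hwc
        exact absurd hwc (Set.notMem_empty w)
    -- IH applications
    have IH_A := IH k₁ hk₁n c hscaleA
    have IH_B := IH nB (by omega) cB hscaleB
    -- cost bookkeeping
    have hcostsplit : chCost J η k₁ c + chCost J η nB cB ≤ chCost J η n c := by
      have := chCost_split_le J η hη k₁ (k₂ + 1) n c (by
        have : k₁ ≤ k₂ := Fs.min'_le k₂ hk₂Fs
        omega) hk₂1n
      exact this
    have hcostA0 : 0 ≤ chCost J η k₁ c := chCost_nonneg J η hη _ _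
    have hcostB0 : 0 ≤ chCost J η nB cB := chCost_nonneg J η hη _ _
    -- bypass
    have bypass : (∀ z ∈ wSet J c kst, b * scaleOf J δ c kst ≤ dist (c 0) z) →
        (∀ z ∈ wSet J c kst, b * scaleOf J δ c kst ≤ dist (c n) z) →
        dist (c 0) (c n) ≤ dist (c 0) (c k₁) + dist (c (k₂ + 1)) (c n) := by
      intro h1 h2
      exact hbyp hkst_hop.2.choose (wSet J c kst) hWstJ (c 0) (c n)
        (fun z hz => hδstval ▸ h1 z hz) (fun z hz => hδstval ▸ h2 z hz)
        (c k₁) he (c (k₂ + 1)) hq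
    -- pair bound inside the top set
    have hpairW : ∀ p ∈ wSet J c kst, ∀ q' ∈ wSet J c kst,
        dist p q' ≤ a * scaleOf J δ c kst := by
      intro p hp q' hq'
      have hpW : p ∈ wSet J c kst := hp
      exact hop_pair_le ha hδ hpair c kst hkst_hop hpW hq'
    have hδs_ab : (a + b) * scaleOf J δ c kst ≤ (a + b) * s :=
      mul_le_mul_of_nonneg_left hδsts (by linarith)
    refine ⟨?_, ?_, ?_, ?_⟩
    -- part (b): both endpoints far from all hop sets
    · intro hfarL hfarR
      have hA := IH_A.1 (fun k hk w hw => hfarL k (by omega) w hw) heFar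
      have hB := IH_B.1 hqFar (by
        intro j hj w hw
        rw [hBend]
        exact hfarR (k₂ + 1 + j) (by omega) w hw)
      rw [hB0, hBend] at hB
      have hfar0 : ∀ z ∈ wSet J c kst, b * scaleOf J δ c kst ≤ dist (c 0) z :=
        fun z hz => hfarL kst hkstn z hz
      have hfarn : ∀ z ∈ wSet J c kst, b * scaleOf J δ c kst ≤ dist (c n) z :=
        fun z hz => hfarR kst hkstn z hz
      calc dist (c 0) (c n) ≤ dist (c 0) (c k₁) + dist (c (k₂ + 1)) (c n) :=
            bypass hfar0 hfarn
        _ ≤ chCost J η k₁ c + chCost J η nB cB := add_le_add hA hB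
        _ ≤ chCost J η n c := hcostsplit
    -- part (c): right endpoint far
    · intro hfarR
      have hB := IH_B.1 hqFar (by
        intro j hj w hw
        rw [hBend]
        exact hfarR (k₂ + 1 + j) (by omega) w hw)
      rw [hB0, hBend] at hB
      have hfarn : ∀ z ∈ wSet J c kst, b * scaleOf J δ c kst ≤ dist (c n) z :=
        fun z hz => hfarR kst hkstn z hz
      by_cases hnear : ∀ z ∈ wSet J c kst, b * scaleOf J δ c kst ≤ dist (c 0) z
      · have hA := IH_A.2.1 heFar
        calc dist (c 0) (c n) ≤ dist (c 0) (c k₁) + dist (c (k₂ + 1)) (c n) :=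
              bypass hnear hfarn
          _ ≤ (chCost J η k₁ c + (a + b) * s) + chCost J η nB cB := add_le_add hA hB
          _ ≤ chCost J η n c + (a + b) * s := by linarith
      · push_neg at hnear
        obtain ⟨z, hz, hzlt⟩ := hnear
        have h1 : dist z (c (k₂ + 1)) ≤ a * scaleOf J δ c kst := hpairW z hz _ hq
        have habs : a * scaleOf J δ c kst + b * scaleOf J δ c kst
            = (a + b) * scaleOf J δ c kst := by ring
        calc dist (c 0) (c n) ≤ dist (c 0) z + dist z (c n) := dist_triangle _ _ _
          _ ≤ dist (c 0) z + (dist z (c (k₂ + 1)) + dist (c (k₂ + 1)) (c n)) := by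
              have := dist_triangle z (c (k₂ + 1)) (c n)
              linarith
          _ ≤ b * scaleOf J δ c kst + (a * scaleOf J δ c kst + chCost J η nB cB) := by
              have := hzlt.le
              gcongr
          _ ≤ chCost J η n c + (a + b) * s := by linarith
    -- part (c'): left endpoint far
    · intro hfarL
      have hA := IH_A.1 (fun k hk w hw => hfarL k (by omega) w hw) heFar
      have hfar0 : ∀ z ∈ wSet J c kst, b * scaleOf J δ c kst ≤ dist (c 0) z :=
        fun z hz => hfarL kst hkstn z hz
      by_cases hnear : ∀ z ∈ wSet J c kst, b * scaleOf J δ c kst ≤ dist (c n) z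
      · have hB := IH_B.2.2.1 hqFar
        rw [hB0, hBend] at hB
        calc dist (c 0) (c n) ≤ dist (c 0) (c k₁) + dist (c (k₂ + 1)) (c n) :=
              bypass hfar0 hnear
          _ ≤ chCost J η k₁ c + (chCost J η nB cB + (a + b) * s) := add_le_add hA hB
          _ ≤ chCost J η n c + (a + b) * s := by linarith
      · push_neg at hnear
        obtain ⟨z, hz, hzlt⟩ := hnear
        have h1 : dist (c k₁) z ≤ a * scaleOf J δ c kst := hpairW _ he z hz
        calc dist (c 0) (c n) ≤ dist (c 0) (c k₁) + dist (c k₁) (c n) := dist_triangle _ _ _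
          _ ≤ dist (c 0) (c k₁) + (dist (c k₁) z + dist z (c n)) := by
              have := dist_triangle (c k₁) z (c n)
              linarith
          _ ≤ chCost J η k₁ c + (a * scaleOf J δ c kst + b * scaleOf J δ c kst) := by
              have h2 : dist z (c n) ≤ b * scaleOf J δ c kst := by
                rw [dist_comm]; exact hzlt.le
              gcongr
          _ ≤ chCost J η n c + (a + b) * s := by linarith
    -- part (a): both endpoints free
    · by_cases hnear0 : ∀ z ∈ wSet J c kst, b * scaleOf J δ c kst ≤ dist (c 0) z
      · by_cases hnearn : ∀ z ∈ wSet J c kst, b * scaleOf J δ c kst ≤ dist (c n) z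
        · have hA := IH_A.2.1 heFar
          have hB := IH_B.2.2.1 hqFar
          rw [hB0, hBend] at hB
          calc dist (c 0) (c n) ≤ dist (c 0) (c k₁) + dist (c (k₂ + 1)) (c n) :=
                bypass hnear0 hnearn
            _ ≤ (chCost J η k₁ c + (a + b) * s) + (chCost J η nB cB + (a + b) * s) :=
                add_le_add hA hB
            _ ≤ chCost J η n c + 2 * ((a + b) * s) := by linarith
        · push_neg at hnearn
          obtain ⟨z, hz, hzlt⟩ := hnearn
          have hA := IH_A.2.1 heFar
          have h1 : dist (c k₁) z ≤ a * scaleOf J δ c kst := hpairW _ he z hz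
          calc dist (c 0) (c n) ≤ dist (c 0) (c k₁) + dist (c k₁) (c n) := dist_triangle _ _ _
            _ ≤ dist (c 0) (c k₁) + (dist (c k₁) z + dist z (c n)) := by
                have := dist_triangle (c k₁) z (c n)
                linarith
            _ ≤ (chCost J η k₁ c + (a + b) * s)
                + (a * scaleOf J δ c kst + b * scaleOf J δ c kst) := by
                have h2 : dist z (c n) ≤ b * scaleOf J δ c kst := by
                  rw [dist_comm]; exact hzlt.le
                gcongr
            _ ≤ chCost J η n c + 2 * ((a + b) * s) := by linarith
      · push_neg at hnear0
        obtain ⟨z, hz, hzlt⟩ := hnear0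
        have hB := IH_B.2.2.1 hqFar
        rw [hB0, hBend] at hB
        have h1 : dist z (c (k₂ + 1)) ≤ a * scaleOf J δ c kst := hpairW z hz _ hq
        calc dist (c 0) (c n) ≤ dist (c 0) z + dist z (c n) := dist_triangle _ _ _
          _ ≤ dist (c 0) z + (dist z (c (k₂ + 1)) + dist (c (k₂ + 1)) (c n)) := by
              have := dist_triangle z (c (k₂ + 1)) (c n)
              linarith
          _ ≤ b * scaleOf J δ c kst
              + (a * scaleOf J δ c kst + (chCost J η nB cB + (a + b) * s)) := by
              have := hzlt.le
              gcongr
          _ ≤ chCost J η n c + 2 * ((a + b) * s) := by linarith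


/-- Iterated doubling: cover a closed ball by `N^k` balls of radius `R/2^k`. -/
lemma iter_cover (N : ℕ)
    (hN : ∀ (x : X) (r : ℝ), 0 < r → ∃ t : Finset X, t.card ≤ N ∧
      Metric.closedBall x r ⊆ ⋃ y ∈ t, Metric.closedBall y (r / 2)) :
    ∀ (k : ℕ) (x : X) (R : ℝ), 0 < R → ∃ T : Finset X, T.card ≤ N ^ k ∧
      Metric.closedBall x R ⊆ ⋃ y ∈ T, Metric.closedBall y (R / 2 ^ k) := by
  intro k
  induction k with
  | zero =>
    intro x R hR
    refine ⟨{x}, by simp, ?_⟩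
    intro z hz
    simp only [Finset.mem_singleton, Set.mem_iUnion]
    exact ⟨x, rfl, by simpa using hz⟩
  | succ k ih =>
    intro x R hR
    obtain ⟨T, hTc, hTs⟩ := ih x R hR
    have hpos : 0 < R / 2 ^ k := by positivity
    choose F hFc hFs using fun y : X => hN y (R / 2 ^ k) hpos
    refine ⟨T.biUnion F, ?_, ?_⟩
    · calc (T.biUnion F).card ≤ ∑ y ∈ T, (F y).card := Finset.card_biUnion_le
        _ ≤ ∑ _y ∈ T, N := Finset.sum_le_sum (fun y _ => hFc y)
        _ = T.card * N := by rw [Finset.sum_const, smul_eq_mul]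
        _ ≤ N ^ k * N := Nat.mul_le_mul_right N hTc
        _ = N ^ (k + 1) := (pow_succ N k).symm
    · intro z hz
      obtain ⟨y, hyT, hzy⟩ := Set.mem_iUnion₂.mp (hTs hz)
      obtain ⟨w, hwF, hzw⟩ := Set.mem_iUnion₂.mp (hFs y hzy)
      refine Set.mem_iUnion₂.mpr ⟨w, Finset.mem_biUnion.mpr ⟨y, hyT, hwF⟩, ?_⟩
      have hdiv : R / 2 ^ k / 2 = R / 2 ^ (k + 1) := by
        rw [div_div, pow_succ]
      rwa [hdiv] at hzw

/-- A `ρ'`-separated set covered by balls of radius `< ρ'/2` centered in `T` has at most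
`T.card` elements. -/
lemma card_of_separated (T : Finset X) (ρ' rad : ℝ) (h2 : 2 * rad < ρ') (Y : Set X)
    (hcov : ∀ p ∈ Y, ∃ y ∈ T, p ∈ Metric.closedBall y rad)
    (hsep : ∀ p ∈ Y, ∀ q ∈ Y, p ≠ q → ρ' ≤ dist p q) :
    Y.Finite ∧ Y.ncard ≤ T.card := by
  classical
  choose φ hφT hφB using hcov
  have hinj : ∀ p, ∀ hp : p ∈ Y, ∀ q, ∀ hq : q ∈ Y, φ p hp = φ q hq → p = q := by
    intro p hp q hq heq
    by_contra hne
    have h1 : dist p (φ p hp) ≤ rad := Metric.mem_closedBall.mp (hφB p hp)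
    have h2' : dist q (φ q hq) ≤ rad := Metric.mem_closedBall.mp (hφB q hq)
    have htri : dist p q ≤ dist p (φ p hp) + dist (φ q hq) q := by
      rw [heq]
      have := dist_triangle p (φ q hq) q
      linarith
    have hd : dist (φ q hq) q ≤ rad := by rw [dist_comm]; exact h2'
    have := hsep p hp q hq hne
    linarith
  set f : Y → T := fun p => ⟨φ p.1 p.2, hφT p.1 p.2⟩ with hfdef
  have hfinj : Function.Injective f := by
    intro p q h
    have : φ p.1 p.2 = φ q.1 q.2 := congrArg Subtype.val h
    exact Subtype.ext (hinj p.1 p.2 q.1 q.2 this)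
  have hfinY : Finite Y := Finite.of_injective f hfinj
  refine ⟨Set.finite_coe_iff.mp hfinY, ?_⟩
  calc Y.ncard = Nat.card Y := (Nat.card_coe_set_eq Y).symm
    _ ≤ Nat.card T := Nat.card_le_card_of_injective f hfinj
    _ = T.card := by simp [Nat.card_eq_fintype_card]

/-- All hops of scale `> 3r/b` in a cheap chain lie on a single shortcut set. -/
lemma one_payer (J : ℕ → Set (Set X)) (δ : ℕ → ℝ) (a₀ a b M : ℝ) (η : ℕ → ℝ)
    (hS : HasShortcuts J δ a₀ a b M) (hη : ∀ i, 0 < η i ∧ η i ≤ 1)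
    (r : ℝ) (hr : 0 < r) (n : ℕ) (c : ℕ → X) (hcost : chCost J η n c < 2 * r) :
    ∀ k, k < n → ∀ k', k' < n → 3 * r / b < scaleOf J δ c k →
      3 * r / b < scaleOf J δ c k' → wSet J c k = wSet J c k' := by
  classical
  have hSkeep := hS
  obtain ⟨ha₀, ha, hb, hM, hδ, -, -, hdisj, hpair, hsepax, hbyp, -, -⟩ := hS
  have hρpos : 0 < 3 * r / b := by positivity
  have payer_hop : ∀ m, 3 * r / b < scaleOf J δ c m → isHop J c m := by
    intro m hm
    by_contra h
    rw [scaleOf_zero J δ c m h] at hm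
    linarith
  by_contra hcon
  push_neg at hcon
  obtain ⟨k, hk, k', hk', hpk, hpk', hne0⟩ := hcon
  set Ps : Finset ℕ := (Finset.range n).filter (fun m => 3 * r / b < scaleOf J δ c m)
    with hPsdef
  have hmemPs : ∀ m, m ∈ Ps ↔ (m < n ∧ 3 * r / b < scaleOf J δ c m) := by
    intro m; rw [hPsdef, Finset.mem_filter, Finset.mem_range]
  have hPsne : Ps.Nonempty := ⟨k, (hmemPs k).mpr ⟨hk, hpk⟩⟩
  set h₀ := Ps.min' hPsne with hh₀def
  have hh₀Ps := Ps.min'_mem hPsne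
  have hh₀n : h₀ < n := ((hmemPs h₀).mp hh₀Ps).1
  have hh₀p : 3 * r / b < scaleOf J δ c h₀ := ((hmemPs h₀).mp hh₀Ps).2
  have hh₀hop : isHop J c h₀ := payer_hop h₀ hh₀p
  set Qs : Finset ℕ := Ps.filter (fun m => wSet J c m ≠ wSet J c h₀) with hQsdef
  have hmemQs : ∀ m, m ∈ Qs ↔ (m ∈ Ps ∧ wSet J c m ≠ wSet J c h₀) := by
    intro m; rw [hQsdef, Finset.mem_filter]
  have hQsne : Qs.Nonempty := by
    by_cases hkP : wSet J c k = wSet J c h₀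
    · refine ⟨k', (hmemQs k').mpr ⟨(hmemPs k').mpr ⟨hk', hpk'⟩, ?_⟩⟩
      rw [← hkP]
      exact fun h => hne0 h.symm
    · exact ⟨k, (hmemQs k).mpr ⟨(hmemPs k).mpr ⟨hk, hpk⟩, hkP⟩⟩
  set h' := Qs.min' hQsne with hh'def
  have hh'Qs := Qs.min'_mem hQsne
  have hh'Ps : h' ∈ Ps := ((hmemQs h').mp hh'Qs).1
  have hh'W : wSet J c h' ≠ wSet J c h₀ := ((hmemQs h').mp hh'Qs).2
  have hh'n : h' < n := ((hmemPs h').mp hh'Ps).1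
  have hh'p : 3 * r / b < scaleOf J δ c h' := ((hmemPs h').mp hh'Ps).2
  have hh'hop : isHop J c h' := payer_hop h' hh'p
  have hh₀h' : h₀ < h' := by
    have h1 : h₀ ≤ h' := Ps.min'_le h' hh'Ps
    rcases lt_or_eq_of_le h1 with h | h
    · exact h
    · exact absurd (h ▸ rfl) hh'W.symm
  set Gs : Finset ℕ := (Finset.range h').filter
      (fun m => isHop J c m ∧ wSet J c m = wSet J c h₀) with hGsdef
  have hmemGs : ∀ m, m ∈ Gs ↔ (m < h' ∧ isHop J c m ∧ wSet J c m = wSet J c h₀) := by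
    intro m; rw [hGsdef, Finset.mem_filter, Finset.mem_range]
  have hGsne : Gs.Nonempty := ⟨h₀, (hmemGs h₀).mpr ⟨hh₀h', hh₀hop, rfl⟩⟩
  set kP := Gs.max' hGsne with hkPdef
  have hkPGs := Gs.max'_mem hGsne
  have hkPh' : kP < h' := ((hmemGs kP).mp hkPGs).1
  have hkPhop : isHop J c kP := ((hmemGs kP).mp hkPGs).2.1
  have hkPW : wSet J c kP = wSet J c h₀ := ((hmemGs kP).mp hkPGs).2.2
  set Ms : Finset ℕ := (Finset.range n).filter
      (fun m => kP < m ∧ isHop J c m ∧ wSet J c m = wSet J c h') with hMsdef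
  have hmemMs : ∀ m, m ∈ Ms ↔ (m < n ∧ kP < m ∧ isHop J c m ∧ wSet J c m = wSet J c h') := by
    intro m; rw [hMsdef, Finset.mem_filter, Finset.mem_range]
  have hMsne : Ms.Nonempty := ⟨h', (hmemMs h').mpr ⟨hh'n, hkPh', hh'hop, rfl⟩⟩
  set m' := Ms.min' hMsne with hm'def
  have hm'Ms := Ms.min'_mem hMsne
  have hm'n : m' < n := ((hmemMs m').mp hm'Ms).1
  have hkPm' : kP < m' := ((hmemMs m').mp hm'Ms).2.1
  have hm'hop : isHop J c m' := ((hmemMs m').mp hm'Ms).2.2.1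
  have hm'W : wSet J c m' = wSet J c h' := ((hmemMs m').mp hm'Ms).2.2.2
  have hm'h' : m' ≤ h' := Ms.min'_le h' ((hmemMs h').mpr ⟨hh'n, hkPh', hh'hop, rfl⟩)
  -- middle hops are small and on neither set
  have hmid : ∀ t, kP < t → t < m' → isHop J c t →
      wSet J c t ≠ wSet J c h₀ ∧ wSet J c t ≠ wSet J c h' ∧ scaleOf J δ c t ≤ 3 * r / b := by
    intro t ht1 ht2 hth
    have htn : t < n := by omega
    have hth' : t < h' := by omega
    have hP : wSet J c t ≠ wSet J c h₀ := by
      intro hPeq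
      have : t ≤ kP := Gs.le_max' t ((hmemGs t).mpr ⟨hth', hth, hPeq⟩)
      omega
    have hP' : wSet J c t ≠ wSet J c h' := by
      intro hPeq
      have : m' ≤ t := Ms.min'_le t ((hmemMs t).mpr ⟨htn, ht1, hth, hPeq⟩)
      omega
    refine ⟨hP, hP', ?_⟩
    by_contra hps
    push_neg at hps
    have htPs : t ∈ Ps := (hmemPs t).mpr ⟨htn, hps⟩
    have : wSet J c t = wSet J c h₀ := by
      by_contra hq
      have : h' ≤ t := Qs.min'_le t ((hmemQs t).mpr ⟨htPs, hq⟩)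
      omega
    exact hP this
  -- segment chain
  set nS := m' - (kP + 1) with hnSdef
  set cS : ℕ → X := fun j => c (kP + 1 + j) with hcSdef
  have hSn : kP + 1 + nS = m' := by omega
  have hSend : cS nS = c m' := by rw [hcSdef]; simp only []; rw [hSn]
  have hS0 : cS 0 = c (kP + 1) := rfl
  have hcP1 : c (kP + 1) ∈ wSet J c h₀ := hkPW ▸ (wSet_spec J c kP hkPhop).2.2
  have hcm' : c m' ∈ wSet J c h' := hm'W ▸ (wSet_spec J c m' hm'hop).2.1
  have hscaleS : ∀ j, j < nS → scaleOf J δ cS j ≤ 3 * r / b := by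
    intro j hj
    have hsc : scaleOf J δ cS j = scaleOf J δ c (kP + 1 + j) := rfl
    rw [hsc]
    by_cases hth : isHop J c (kP + 1 + j)
    · exact (hmid (kP + 1 + j) (by omega) (by omega) hth).2.2
    · rw [scaleOf_zero J δ c _ hth]
      exact hρpos.le
  have hh₀J : wSet J c h₀ ∈ J hh₀hop.2.choose := (wSet_spec J c h₀ hh₀hop).1
  have hh'J : wSet J c h' ∈ J hh'hop.2.choose := (wSet_spec J c h' hh'hop).1
  have hδh₀ : scaleOf J δ c h₀ = δ hh₀hop.2.choose := scaleOf_spec J δ c h₀ hh₀hop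
  have hδh' : scaleOf J δ c h' = δ hh'hop.2.choose := scaleOf_spec J δ c h' hh'hop
  have hfarL : ∀ j, j < nS → ∀ w ∈ wSet J cS j, b * scaleOf J δ cS j ≤ dist (cS 0) w := by
    intro j hj w hw
    have hwc : w ∈ wSet J c (kP + 1 + j) := hw
    have hsc : scaleOf J δ cS j = scaleOf J δ c (kP + 1 + j) := rfl
    rw [hsc, hS0]
    by_cases hth : isHop J c (kP + 1 + j)
    · have hmids := hmid (kP + 1 + j) (by omega) (by omega) hth
      have hle : δ hth.2.choose ≤ δ hh₀hop.2.choose := by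
        have := hmids.2.2
        rw [scaleOf_spec J δ c _ hth] at this
        rw [← hδh₀]
        linarith
      have := sep_sets hb hsepax (wSet_spec J c _ hth).1 hh₀J hmids.1 hle hwc hcP1
      rw [scaleOf_spec J δ c _ hth]
      rwa [dist_comm]
    · rw [wSet_empty J c _ hth] at hwc
      exact absurd hwc (Set.notMem_empty w)
  have hfarR : ∀ j, j < nS → ∀ w ∈ wSet J cS j, b * scaleOf J δ cS j ≤ dist (cS nS) w := by
    intro j hj w hw
    have hwc : w ∈ wSet J c (kP + 1 + j) := hw
    have hsc : scaleOf J δ cS j = scaleOf J δ c (kP + 1 + j) := rfl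
    rw [hsc, hSend]
    by_cases hth : isHop J c (kP + 1 + j)
    · have hmids := hmid (kP + 1 + j) (by omega) (by omega) hth
      have hle : δ hth.2.choose ≤ δ hh'hop.2.choose := by
        have := hmids.2.2
        rw [scaleOf_spec J δ c _ hth] at this
        rw [← hδh']
        linarith
      have := sep_sets hb hsepax (wSet_spec J c _ hth).1 hh'J hmids.2.1 hle hwc hcm'
      rw [scaleOf_spec J δ c _ hth]
      rwa [dist_comm]
    · rw [wSet_empty J c _ hth] at hwc
      exact absurd hwc (Set.notMem_empty w)
  have hML := (mainChain J δ a₀ a b M η hSkeep hη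
    (3 * r / b) hρpos.le nS cS hscaleS).1 hfarL hfarR
  rw [hS0, hSend] at hML
  have hseg_le : chCost J η nS cS ≤ chCost J η n c :=
    chCost_seg_le J η hη (kP + 1) nS n c (by omega)
  have hWne : wSet J c h₀ ≠ wSet J c h' := fun h => hh'W h.symm
  rcases le_total (δ hh₀hop.2.choose) (δ hh'hop.2.choose) with hle | hle
  · have hsep' := sep_sets hb hsepax hh₀J hh'J hWne hle hcP1 hcm'
    have h3r : 3 * r < b * δ hh₀hop.2.choose := by
      have h1 : 3 * r / b < δ hh₀hop.2.choose := hδh₀ ▸ hh₀p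
      have h2 : 3 * r < δ hh₀hop.2.choose * b := (div_lt_iff₀ hb).mp h1
      linarith [h2]
    linarith
  · have hsep' := sep_sets hb hsepax hh'J hh₀J hWne.symm hle hcm' hcP1
    rw [dist_comm] at hsep'
    have h3r : 3 * r < b * δ hh'hop.2.choose := by
      have h1 : 3 * r / b < δ hh'hop.2.choose := hδh' ▸ hh'p
      have h2 : 3 * r < δ hh'hop.2.choose * b := (div_lt_iff₀ hb).mp h1
      linarith [h2]
    linarith

end Stmt13Aux

open Stmt13Aux in
/-- If `X` is metric doubling and has shortcuts, then the identity map
`(X, d) → (X, d_η)` is David–Semmes regular: it is `1`-Lipschitz and there is `C ≥ 1` such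
that every `d_η`-ball of radius `r` is contained in a union of at most `C` `d`-balls of
radius `C r`. -/
theorem stmt13 {X : Type*} [MetricSpace X] (J : ℕ → Set (Set X)) (δ : ℕ → ℝ)
    (a₀ a b M : ℝ) (hS : HasShortcuts J δ a₀ a b M)
    (η : ℕ → ℝ) (hη : ∀ i, 0 < η i ∧ η i ≤ 1)
    (hdoub : ∃ N : ℕ, ∀ (x : X) (r : ℝ), 0 < r → ∃ t : Finset X, t.card ≤ N ∧
      Metric.closedBall x r ⊆ ⋃ y ∈ t, Metric.closedBall y (r / 2)) :
    (∀ x y : X, dEta J η x y ≤ dist x y) ∧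
    ∃ C : ℝ, 1 ≤ C ∧ ∀ (x : X) (r : ℝ), 0 < r →
      ∃ t : Finset X, (t.card : ℝ) ≤ C ∧
        {z : X | dEta J η x z ≤ r} ⊆ ⋃ y ∈ t, Metric.closedBall y (C * r) := by
  classical
  have hSkeep := hS
  obtain ⟨ha₀, ha, hb, hM, hδ, -, -, hdisj, hpair, hsepax, hbyp, hcardax, -⟩ := hS
  obtain ⟨N, hN⟩ := hdoub
  -- Part 1: the identity is 1-Lipschitz into (X, d_η)
  have hchain : ∀ x z : X, rhoEta J η x z ∈ {t : ℝ | ∃ (n : ℕ) (c : ℕ → X), c 0 = x ∧ c n = z ∧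
      t = ∑ k ∈ Finset.range n, rhoEta J η (c k) (c (k + 1))} := by
    intro x z
    refine ⟨1, fun k => if k = 0 then x else z, by simp, by simp, ?_⟩
    rw [Finset.sum_range_one]
    norm_num
  have hbdd : ∀ x z : X, BddBelow {t : ℝ | ∃ (n : ℕ) (c : ℕ → X), c 0 = x ∧ c n = z ∧
      t = ∑ k ∈ Finset.range n, rhoEta J η (c k) (c (k + 1))} := by
    intro x z
    refine ⟨0, fun t ht => ?_⟩
    obtain ⟨n, c, -, -, rfl⟩ := ht
    exact chCost_nonneg J η hη n c
  have lip : ∀ x y : X, dEta J η x y ≤ dist x y := fun x y =>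
    le_trans (csInf_le (hbdd x y) (hchain x y)) (rho_le_dist J η hη x y)
  -- constants
  set C₇ : ℝ := 2 + 6 * (a + b) / b with hC₇def
  have hC₇pos : 0 < C₇ := by
    have h6 : 0 < 6 * (a + b) / b := div_pos (by linarith) hb
    rw [hC₇def]; linarith
  set c₂ : ℝ := min (3 * a₀ / b) 3 with hc₂def
  have hc₂pos : 0 < c₂ := lt_min (by positivity) (by norm_num)
  obtain ⟨K, hK⟩ : ∃ K : ℕ, 2 * C₇ / c₂ < 2 ^ K := pow_unbounded_of_one_lt _ one_lt_two
  set C : ℝ := max (max C₇ ((N : ℝ) ^ K * M + 1)) 1 with hCdef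
  have hC1 : (1 : ℝ) ≤ C := le_max_right _ _
  have hCC₇ : C₇ ≤ C := le_trans (le_max_left _ _) (le_max_left _ _)
  have hCcard : (N : ℝ) ^ K * M + 1 ≤ C := le_trans (le_max_right _ _) (le_max_left _ _)
  refine ⟨lip, C, hC1, ?_⟩
  intro x r hr
  have hρpos : 0 < 3 * r / b := by positivity
  obtain ⟨T, hTcard, hTsub⟩ := iter_cover N hN K x (C₇ * r) (mul_pos hC₇pos hr)
  set Y : Set X := {p | dist x p ≤ C₇ * r ∧ ∃ i, ∃ S ∈ J i, 3 * r / b < δ i ∧ p ∈ S} with hYdef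
  have hYsep : ∀ p ∈ Y, ∀ q ∈ Y, p ≠ q → c₂ * r ≤ dist p q := by
    rintro p ⟨hpd, i, S, hSJ, hSδ, hpS⟩ q ⟨hqd, i', S', hS'J, hS'δ, hqS'⟩ hne
    by_cases hSS : S = S'
    · subst hSS
      have h1 := (hpair i S hSJ p hpS q hqS' hne).1
      have h3 : c₂ ≤ 3 * a₀ / b := min_le_left _ _
      have h4 : c₂ * r ≤ 3 * a₀ / b * r := mul_le_mul_of_nonneg_right h3 hr.le
      have h5 : 3 * a₀ / b * r = a₀ * (3 * r / b) := by ring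
      have h6 : a₀ * (3 * r / b) ≤ a₀ * δ i := mul_le_mul_of_nonneg_left hSδ.le ha₀.le
      linarith
    · have h3 : c₂ ≤ 3 := min_le_right _ _
      have h4 : c₂ * r ≤ 3 * r := mul_le_mul_of_nonneg_right h3 hr.le
      rcases le_total (δ i) (δ i') with hle | hle
      · have hd := sep_sets hb hsepax hSJ hS'J hSS hle hpS hqS'
        have h5 : 3 * r < b * δ i := by
          have := (div_lt_iff₀ hb).mp hSδ; linarith
        linarith
      · have hd := sep_sets hb hsepax hS'J hSJ (Ne.symm hSS) hle hqS' hpS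
        rw [dist_comm] at hd
        have h5 : 3 * r < b * δ i' := by
          have := (div_lt_iff₀ hb).mp hS'δ; linarith
        linarith
  have hYcov : ∀ p ∈ Y, ∃ y ∈ T, p ∈ Metric.closedBall y (C₇ * r / 2 ^ K) := by
    intro p hp
    have hball : p ∈ Metric.closedBall x (C₇ * r) := by
      rw [Metric.mem_closedBall, dist_comm]; exact hp.1
    obtain ⟨y, hyT, hy⟩ := Set.mem_iUnion₂.mp (hTsub hball)
    exact ⟨y, hyT, hy⟩
  have hrad : 2 * (C₇ * r / 2 ^ K) < c₂ * r := by
    have h2K : (0 : ℝ) < 2 ^ K := by positivity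
    have h1 : 2 * C₇ < c₂ * 2 ^ K := by
      have := (div_lt_iff₀ hc₂pos).mp hK; linarith
    rw [show (2 : ℝ) * (C₇ * r / 2 ^ K) = 2 * C₇ * r / 2 ^ K by ring, div_lt_iff₀ h2K]
    nlinarith
  obtain ⟨hYfin, hYcard⟩ := card_of_separated T (c₂ * r) (C₇ * r / 2 ^ K) hrad Y hYcov hYsep
  set g : X → Finset X := fun p =>
    if h : ∃ i, ∃ S ∈ J i, 3 * r / b < δ i ∧ p ∈ S then
      (hcardax h.choose h.choose_spec.choose h.choose_spec.choose_spec.1).1.toFinset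
    else ∅ with hgdef
  set FY := hYfin.toFinset with hFYdef
  refine ⟨insert x (FY.biUnion g), ?_, ?_⟩
  · -- cardinality bound
    have h1 : (insert x (FY.biUnion g)).card ≤ (FY.biUnion g).card + 1 :=
      Finset.card_insert_le _ _
    have h2 : (FY.biUnion g).card ≤ ∑ p ∈ FY, (g p).card := Finset.card_biUnion_le
    have h3 : ∀ p ∈ FY, ((g p).card : ℝ) ≤ M := by
      intro p hp
      have hpY : p ∈ Y := hYfin.mem_toFinset.mp hp
      have hex := hpY.2
      simp only [hgdef, dif_pos hex]
      have hfin := (hcardax hex.choose hex.choose_spec.choose hex.choose_spec.choose_spec.1).1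
      have hM' := (hcardax hex.choose hex.choose_spec.choose hex.choose_spec.choose_spec.1).2.2
      rwa [Set.ncard_eq_toFinset_card _ hfin] at hM'
    have h4 : (∑ p ∈ FY, ((g p).card : ℝ)) ≤ (FY.card : ℝ) * M := by
      calc (∑ p ∈ FY, ((g p).card : ℝ)) ≤ ∑ _p ∈ FY, M := Finset.sum_le_sum h3
        _ = (FY.card : ℝ) * M := by rw [Finset.sum_const, nsmul_eq_mul]
    have h5 : (FY.card : ℝ) ≤ (N : ℝ) ^ K := by
      have he : FY.card = Y.ncard := (Set.ncard_eq_toFinset_card Y hYfin).symm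
      have h6 : Y.ncard ≤ T.card := hYcard
      have h7 : T.card ≤ N ^ K := hTcard
      rw [he]
      calc (Y.ncard : ℝ) ≤ (T.card : ℝ) := Nat.cast_le.mpr h6
        _ ≤ ((N ^ K : ℕ) : ℝ) := Nat.cast_le.mpr h7
        _ = (N : ℝ) ^ K := by push_cast; ring
    have hc1 : ((insert x (FY.biUnion g)).card : ℝ) ≤ ((FY.biUnion g).card : ℝ) + 1 := by
      exact_mod_cast h1
    have hc2 : ((FY.biUnion g).card : ℝ) ≤ ∑ p ∈ FY, ((g p).card : ℝ) := by
      exact_mod_cast h2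
    have h8 : (FY.card : ℝ) * M ≤ (N : ℝ) ^ K * M := mul_le_mul_of_nonneg_right h5 hM.le
    calc ((insert x (FY.biUnion g)).card : ℝ) ≤ ((FY.biUnion g).card : ℝ) + 1 := hc1
      _ ≤ (∑ p ∈ FY, ((g p).card : ℝ)) + 1 := by linarith
      _ ≤ (N : ℝ) ^ K * M + 1 := by linarith
      _ ≤ C := hCcard
  · -- coverage
    intro z hz
    rw [Set.mem_setOf_eq] at hz
    have hlt : dEta J η x z < 2 * r := lt_of_le_of_lt hz (by linarith)
    have hne : {t : ℝ | ∃ (n : ℕ) (c : ℕ → X), c 0 = x ∧ c n = z ∧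
        t = ∑ k ∈ Finset.range n, rhoEta J η (c k) (c (k + 1))}.Nonempty := ⟨_, hchain x z⟩
    obtain ⟨tv, htv, htvlt⟩ := (csInf_lt_iff (hbdd x z) hne).mp hlt
    obtain ⟨n, c, hc0, hcn, rfl⟩ := htv
    have hcost : chCost J η n c < 2 * r := htvlt
    have harr : 2 * ((a + b) * (3 * r / b)) = 6 * (a + b) / b * r := by
      field_simp; ring
    have hC₇r : C₇ * r = 2 * r + 6 * (a + b) / b * r := by rw [hC₇def]; ring
    have hCr : C₇ * r ≤ C * r := mul_le_mul_of_nonneg_right hCC₇ hr.le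
    have payer_hop : ∀ m, 3 * r / b < scaleOf J δ c m → isHop J c m := by
      intro m hm
      by_contra h
      rw [scaleOf_zero J δ c m h] at hm
      linarith
    by_cases hpay : ∃ k, k < n ∧ 3 * r / b < scaleOf J δ c k
    case neg =>
      push_neg at hpay
      have hML := (mainChain J δ a₀ a b M η hSkeep hη (3 * r / b) hρpos.le n c hpay).2.2.2
      have hdist : dist (c 0) (c n) < C₇ * r := by
        rw [hC₇r]
        linarith [harr ▸ hML]
      refine Set.mem_iUnion₂.mpr ⟨x, Finset.mem_insert_self x _, ?_⟩
      rw [Metric.mem_closedBall]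
      have : dist z x = dist (c 0) (c n) := by rw [hc0, hcn, dist_comm]
      rw [this]
      linarith
    case pos =>
      obtain ⟨h₀, hh₀n, hh₀p⟩ := hpay
      have hh₀hop : isHop J c h₀ := payer_hop h₀ hh₀p
      have hSdagJ : wSet J c h₀ ∈ J hh₀hop.2.choose := (wSet_spec J c h₀ hh₀hop).1
      have hddag : 3 * r / b < δ hh₀hop.2.choose := by
        rw [← scaleOf_spec J δ c h₀ hh₀hop]; exact hh₀p
      set Fs : Finset ℕ := (Finset.range n).filter
          (fun k => isHop J c k ∧ wSet J c k = wSet J c h₀) with hFsdef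
      have hmemFs : ∀ k, k ∈ Fs ↔ (k < n ∧ isHop J c k ∧ wSet J c k = wSet J c h₀) := by
        intro k; rw [hFsdef, Finset.mem_filter, Finset.mem_range]
      have hFsne : Fs.Nonempty := ⟨h₀, (hmemFs h₀).mpr ⟨hh₀n, hh₀hop, rfl⟩⟩
      set k₁ := Fs.min' hFsne with hk₁def
      set k₂ := Fs.max' hFsne with hk₂def
      have hk₁Fs := Fs.min'_mem hFsne
      have hk₂Fs := Fs.max'_mem hFsne
      have hk₁n : k₁ < n := ((hmemFs k₁).mp hk₁Fs).1
      have hk₂n : k₂ < n := ((hmemFs k₂).mp hk₂Fs).1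
      have hk₁hop : isHop J c k₁ := ((hmemFs k₁).mp hk₁Fs).2.1
      have hk₂hop : isHop J c k₂ := ((hmemFs k₂).mp hk₂Fs).2.1
      have hk₁W : wSet J c k₁ = wSet J c h₀ := ((hmemFs k₁).mp hk₁Fs).2.2
      have hk₂W : wSet J c k₂ = wSet J c h₀ := ((hmemFs k₂).mp hk₂Fs).2.2
      have heS : c k₁ ∈ wSet J c h₀ := hk₁W ▸ (wSet_spec J c k₁ hk₁hop).2.1
      have hqS : c (k₂ + 1) ∈ wSet J c h₀ := hk₂W ▸ (wSet_spec J c k₂ hk₂hop).2.2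
      have hOP := one_payer J δ a₀ a b M η hSkeep hη r hr n c hcost
      have hscaleA : ∀ k, k < k₁ → scaleOf J δ c k ≤ 3 * r / b := by
        intro k hk
        by_contra hbig
        push_neg at hbig
        have hkhop : isHop J c k := payer_hop k hbig
        have hkW : wSet J c k = wSet J c h₀ := hOP k (by omega) h₀ hh₀n hbig hh₀p
        have : k₁ ≤ k := Fs.min'_le k ((hmemFs k).mpr ⟨by omega, hkhop, hkW⟩)
        omega
      set nB := n - (k₂ + 1) with hnBdef
      set cB : ℕ → X := fun j => c (k₂ + 1 + j) with hcBdef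
      have hBn : k₂ + 1 + nB = n := by omega
      have hBend : cB nB = c n := by rw [hcBdef]; simp only []; rw [hBn]
      have hscaleB : ∀ j, j < nB → scaleOf J δ cB j ≤ 3 * r / b := by
        intro j hj
        have hsc : scaleOf J δ cB j = scaleOf J δ c (k₂ + 1 + j) := rfl
        rw [hsc]
        by_contra hbig
        push_neg at hbig
        have hkhop : isHop J c (k₂ + 1 + j) := payer_hop _ hbig
        have hkW : wSet J c (k₂ + 1 + j) = wSet J c h₀ :=
          hOP (k₂ + 1 + j) (by omega) h₀ hh₀n hbig hh₀p
        have : k₂ + 1 + j ≤ k₂ := Fs.le_max' _ ((hmemFs _).mpr ⟨by omega, hkhop, hkW⟩)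
        omega
      have hA := (mainChain J δ a₀ a b M η hSkeep hη (3 * r / b) hρpos.le k₁ c hscaleA).2.2.2
      have hB := (mainChain J δ a₀ a b M η hSkeep hη (3 * r / b) hρpos.le nB cB hscaleB).2.2.2
      rw [hBend] at hB
      have hB0 : cB 0 = c (k₂ + 1) := rfl
      rw [hB0] at hB
      have hcostA : chCost J η k₁ c ≤ chCost J η n c :=
        chCost_prefix_le J η hη k₁ n c (by omega)
      have hcostB : chCost J η nB cB ≤ chCost J η n c :=
        chCost_seg_le J η hη (k₂ + 1) nB n c (by omega)
      have hde : dist x (c k₁) < C₇ * r := by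
        rw [← hc0, hC₇r]
        linarith [harr ▸ hA]
      have hqz : dist (c (k₂ + 1)) z < C₇ * r := by
        rw [← hcn, hC₇r]
        linarith [harr ▸ hB]
      have heY : c k₁ ∈ Y := ⟨hde.le, hh₀hop.2.choose, wSet J c h₀, hSdagJ, hddag, heS⟩
      have hqg : c (k₂ + 1) ∈ g (c k₁) := by
        have hex : ∃ i, ∃ S ∈ J i, 3 * r / b < δ i ∧ c k₁ ∈ S :=
          ⟨hh₀hop.2.choose, wSet J c h₀, hSdagJ, hddag, heS⟩
        simp only [hgdef, dif_pos hex]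
        have hchS := hex.choose_spec.choose_spec
        have hS0eq : hex.choose_spec.choose = wSet J c h₀ := by
          by_contra hne2
          have hd := hdisj _ _ _ hchS.1 _ hSdagJ hne2
          exact (Set.disjoint_left.mp hd hchS.2.2) heS
        rw [Set.Finite.mem_toFinset, hS0eq]
        exact hqS
      refine Set.mem_iUnion₂.mpr ⟨c (k₂ + 1), ?_, ?_⟩
      · exact Finset.mem_insert_of_mem
          (Finset.mem_biUnion.mpr ⟨c k₁, hYfin.mem_toFinset.mpr heY, hqg⟩)
      · rw [Metric.mem_closedBall, dist_comm]
        linarith
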